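/- Let G be a strongly connected finite directed graph whose edges are labeled either 'error' or 'error-free', with maximal ratio τ = max over all cycles of (number of error edges in the cycle)/(length of the cycle). Then for every walk ϖ of length n in G, the number of error edges in ϖ is at most τ·n + |S|, where S is the vertex set of G. -/

import Mathlib

/-- `s` is a walk of length `n` in the graph with edge relation `A`. -/
def IsWalk {V : Type*} (A : V → V → Prop) (s : ℕ → V) (n : ℕ) : Prop :=
  ∀ i < n, A (s i) (s (i + 1))

/-- `s` is a simple cycle of length `l`. -/
def IsCycle {V : Type*} (A : V → V → Prop) (s : ℕ → V) (l : ℕ) : Prop :=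
  0 < l ∧ IsWalk A s l ∧ s l = s 0 ∧ Function.Injective (fun i : Fin l => s i.val)

/-- Number of error edges in the first `n` steps of the walk `s`. -/
def errCount {V : Type*} (lab : V → V → Bool) (s : ℕ → V) (n : ℕ) : ℕ :=
  ((Finset.range n).filter (fun i => lab (s i) (s (i + 1)) = true)).card

lemma errCount_congr {V : Type*} (lab : V → V → Bool) {s t : ℕ → V} {n : ℕ}
    (h : ∀ k ≤ n, s k = t k) : errCount lab s n = errCount lab t n := by
  unfold errCount
  congr 1
  apply Finset.filter_congr
  intro i hi
  rw [Finset.mem_range] at hi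
  rw [h i (le_of_lt hi), h (i + 1) (by omega)]

lemma errCount_succ {V : Type*} (lab : V → V → Bool) (s : ℕ → V) (n : ℕ) :
    errCount lab s (n + 1) =
      errCount lab s n + (if lab (s n) (s (n + 1)) = true then 1 else 0) := by
  unfold errCount
  rw [Finset.range_add_one, Finset.filter_insert]
  split_ifs with h
  · rw [Finset.card_insert_of_notMem (by simp)]
  · simp

lemma errCount_le {V : Type*} (lab : V → V → Bool) (s : ℕ → V) (n : ℕ) :
    errCount lab s n ≤ n := by
  calc errCount lab s n ≤ (Finset.range n).card := Finset.card_filter_le _ _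
  _ = n := Finset.card_range n

lemma errCount_add {V : Type*} (lab : V → V → Bool) (s : ℕ → V) (m k : ℕ) :
    errCount lab s (m + k) = errCount lab s m + errCount lab (fun j => s (m + j)) k := by
  induction k with
  | zero => simp [errCount]
  | succ k ih =>
      have : m + (k + 1) = (m + k) + 1 := by omega
      rw [this, errCount_succ, ih, errCount_succ]
      have h1 : s (m + k + 1) = s (m + (k + 1)) := by ring_nf
      rw [h1]
      omega

theorem stmt1 {V : Type*} [Fintype V]
    (A : V → V → Prop) (lab : V → V → Bool)
    (hsc : ∀ u v : V, ∃ (m : ℕ) (s : ℕ → V), IsWalk A s m ∧ s 0 = u ∧ s m = v)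
    (τ : ℝ)
    (hub : ∀ (s : ℕ → V) (l : ℕ), IsCycle A s l → (errCount lab s l : ℝ) ≤ τ * l)
    (hach : ∃ (s : ℕ → V) (l : ℕ), IsCycle A s l ∧ (errCount lab s l : ℝ) = τ * l)
    (n : ℕ) (s : ℕ → V) (hw : IsWalk A s n) :
    (errCount lab s n : ℝ) ≤ τ * n + Fintype.card V := by
  have hτ : 0 ≤ τ := by
    obtain ⟨c, l, hc, he⟩ := hach
    have hl : (0:ℝ) < (l : ℝ) := by exact_mod_cast hc.1
    have h0 : (0:ℝ) ≤ (errCount lab c l : ℝ) := Nat.cast_nonneg _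
    nlinarith
  clear hach hsc
  induction n using Nat.strong_induction_on generalizing s with
  | _ n ih =>
    by_cases hn : n ≤ Fintype.card V
    · have h1 : (errCount lab s n : ℝ) ≤ (n : ℝ) := by
        exact_mod_cast errCount_le lab s n
      have h2 : (n : ℝ) ≤ (Fintype.card V : ℝ) := by exact_mod_cast hn
      nlinarith [mul_nonneg hτ (Nat.cast_nonneg n : (0:ℝ) ≤ (n:ℝ))]
    · push_neg at hn
      -- pigeonhole: a repeated vertex among s 0, ..., s (card V)
      have hni : ¬ Function.Injective (fun k : Fin (Fintype.card V + 1) => s k.val) := by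
        intro hinj
        have := Fintype.card_le_of_injective _ hinj
        simp at this
      rw [Function.not_injective_iff] at hni
      obtain ⟨a, b, hsab, hab⟩ := hni
      classical
      have hPex : ∃ j, ∃ i, i < j ∧ s i = s j := by
        rcases Nat.lt_or_ge a.val b.val with h | h
        · exact ⟨b.val, a.val, h, hsab⟩
        · have h' : b.val < a.val := by
            rcases Nat.lt_or_ge b.val a.val with h2 | h2
            · exact h2
            · exact absurd (Fin.ext (le_antisymm h2 h)) hab
          exact ⟨a.val, b.val, h', hsab.symm⟩
      set j := Nat.find hPex with hjdef
      obtain ⟨i, hij, hsij⟩ := Nat.find_spec hPex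
      have hjle : j ≤ Fintype.card V := by
        rcases Nat.lt_or_ge a.val b.val with h | h
        · have := Nat.find_min' hPex ⟨a.val, h, hsab⟩
          omega
        · have h' : b.val < a.val := by
            rcases Nat.lt_or_ge b.val a.val with h2 | h2
            · exact h2
            · exact absurd (Fin.ext (le_antisymm h2 h)) hab
          have := Nat.find_min' hPex ⟨b.val, h', hsab.symm⟩
          omega
      have hjn : j < n := by omega
      -- injectivity of s on [0, j)
      have hinjj : ∀ x < j, ∀ y < j, s x = s y → x = y := by
        intro x hx y hy hxy
        by_contra hne
        rcases Nat.lt_or_ge x y with h | h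
        · exact Nat.find_min hPex hy ⟨x, h, hxy⟩
        · have h' : y < x := by omega
          exact Nat.find_min hPex hx ⟨y, h', hxy.symm⟩
      set l := j - i with hldef
      have hl0 : 0 < l := by omega
      have hjl : i + l = j := by omega
      set c : ℕ → V := fun k => s (i + k) with hcdef
      have hcyc : IsCycle A c l := by
        refine ⟨hl0, ?_, ?_, ?_⟩
        · intro k hk
          have : A (s (i + k)) (s (i + k + 1)) := hw (i + k) (by omega)
          simpa [hcdef, Nat.add_assoc] using this
        · show s (i + l) = s (i + 0)
          rw [hjl]
          simp [hjdef, hsij.symm]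
        · intro x y hxy
          have hx : i + x.val < j := by omega
          have hy : i + y.val < j := by omega
          have := hinjj (i + x.val) hx (i + y.val) hy hxy
          exact Fin.ext (by omega)
      have hcb := hub c l hcyc
      set t : ℕ → V := fun k => if k < i then s k else s (k + l) with htdef
      have hti : ∀ k ≤ i, t k = s k := by
        intro k hk
        rcases Nat.lt_or_ge k i with h | h
        · simp [htdef, h]
        · have hk' : k = i := by omega
          subst hk'
          have h1 : t k = s (k + l) := by simp [htdef]
          rw [h1, hjl, ← hsij]
      have hwt : IsWalk A t (n - l) := by
        intro k hk
        rcases Nat.lt_or_ge (k + 1) i with h | h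
        · have h1 : t k = s k := hti k (by omega)
          have h2 : t (k + 1) = s (k + 1) := hti (k + 1) (by omega)
          rw [h1, h2]
          exact hw k (by omega)
        · rcases Nat.lt_or_ge k i with h' | h'
          · -- k + 1 = i
            have hk1 : k + 1 = i := by omega
            have h1 : t k = s k := hti k (by omega)
            have h2 : t (k + 1) = s (k + 1) := hti (k + 1) (by omega)
            rw [h1, h2]
            exact hw k (by omega)
          · have h1 : t k = s (k + l) := if_neg (by omega)
            have h2 : t (k + 1) = s (k + 1 + l) := if_neg (by omega)
            rw [h1, h2]
            have : A (s (k + l)) (s (k + l + 1)) := hw (k + l) (by omega)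
            have harg : k + 1 + l = k + l + 1 := by omega
            rw [harg]
            exact this
      set r := n - j with hrdef
      -- decompose errCount of s
      have hdecs : errCount lab s n =
          errCount lab s i + errCount lab c l + errCount lab (fun k => s (i + (l + k))) r := by
        have hn' : n = i + (l + r) := by omega
        rw [hn', errCount_add, errCount_add]
        simp only [hcdef]
        ring
      have hdect : errCount lab t (n - l) =
          errCount lab s i + errCount lab (fun k => s (i + (l + k))) r := by
        have hn' : n - l = i + r := by omega
        rw [hn', errCount_add]
        congr 1
        · exact errCount_congr lab hti
        · apply errCount_congr
          intro k _
          simp only [htdef]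
          rw [if_neg (by omega)]
          congr 1
          omega
      have key : errCount lab s n = errCount lab t (n - l) + errCount lab c l := by
        omega
      have iht := ih (n - l) (by omega) t hwt
      have hcast : ((n - l : ℕ) : ℝ) = (n : ℝ) - (l : ℝ) := by
        rw [Nat.cast_sub (by omega)]
      rw [key]
      push_cast
      rw [hcast] at iht
      nlinarith
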